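/- Let u : ℝ → ℝ be three times continuously differentiable and let Δt > 0. Set t_k = t₀ + kΔt for k = 0,1,2,3. Then |u(t₃) − 3u(t₂) + 3u(t₁) − u(t₀)|² ≤ 9 Δt⁵ ∫_{t₀}^{t₃} |u'''(s)|² ds. -/

import Mathlib

open intervalIntegral MeasureTheory

/-- Cauchy–Schwarz for interval integrals of continuous functions. -/
lemma sq_intervalIntegral_le {f : ℝ → ℝ} {a b : ℝ} (hab : a ≤ b) (hf : Continuous f) :
    (∫ x in a..b, f x) ^ 2 ≤ (b - a) * ∫ x in a..b, f x ^ 2 := by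
  set μ := volume.restrict (Set.Ioc a b) with hμ
  haveI : IsFiniteMeasure μ := by
    constructor
    simp only [hμ, Measure.restrict_apply_univ, Real.volume_Ioc]
    exact ENNReal.ofReal_lt_top
  obtain ⟨C, hC⟩ := (isCompact_Icc (a := a) (b := b)).exists_bound_of_continuousOn hf.continuousOn
  have hmemf : MemLp (fun x => |f x|) (ENNReal.ofReal 2) μ := by
    refine MemLp.of_bound (hf.abs.aestronglyMeasurable.restrict) C ?_
    refine (ae_restrict_iff' measurableSet_Ioc).2 (Filter.Eventually.of_forall fun x hx => ?_)
    simpa [Real.norm_eq_abs, abs_abs] using hC x (Set.Ioc_subset_Icc_self hx)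
  have hmemg : MemLp (fun _ : ℝ => (1 : ℝ)) (ENNReal.ofReal 2) μ := memLp_const 1
  have hpq : Real.HolderConjugate 2 2 := by constructor <;> norm_num
  have h := integral_mul_le_Lp_mul_Lq_of_nonneg hpq
    (f := fun x => |f x|) (g := fun _ => (1 : ℝ)) (μ := μ)
    (Filter.Eventually.of_forall fun x => abs_nonneg _)
    (Filter.Eventually.of_forall fun x => zero_le_one) hmemf hmemg
  simp only [mul_one, Real.one_rpow] at h
  have hμuniv : ∫ _ : ℝ, (1 : ℝ) ∂μ = b - a := by
    simp [hμ, Real.volume_Ioc, ENNReal.toReal_ofReal (sub_nonneg.2 hab), hab]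
  rw [hμuniv] at h
  have habs2 : ∀ x, |f x| ^ (2:ℝ) = f x ^ 2 := fun x => by
    rw [show ((2:ℝ)) = ((2:ℕ):ℝ) by norm_num, Real.rpow_natCast, sq_abs]
  simp only [habs2] at h
  have hint2 : ∫ x in a..b, f x ^ 2 = ∫ x, f x ^ 2 ∂μ := integral_of_le hab
  have hint1 : (∫ x in a..b, f x) = ∫ x, f x ∂μ := integral_of_le hab
  have hnn2 : 0 ≤ ∫ x, f x ^ 2 ∂μ := integral_nonneg fun x => sq_nonneg _
  have h1 : |∫ x, f x ∂μ| ≤ ∫ x, |f x| ∂μ := by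
    simpa [Real.norm_eq_abs] using norm_integral_le_integral_norm (μ := μ) f
  have key : |∫ x, f x ∂μ| ≤ (∫ x, f x ^ 2 ∂μ) ^ ((1:ℝ)/2) * (b - a) ^ ((1:ℝ)/2) :=
    h1.trans h
  have hba : (0:ℝ) ≤ b - a := sub_nonneg.2 hab
  calc (∫ x in a..b, f x) ^ 2 = |∫ x, f x ∂μ| ^ 2 := by rw [hint1, sq_abs]
    _ ≤ ((∫ x, f x ^ 2 ∂μ) ^ ((1:ℝ)/2) * (b - a) ^ ((1:ℝ)/2)) ^ 2 := by
        apply pow_le_pow_left₀ (abs_nonneg _) key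
    _ = (b - a) * ∫ x, f x ^ 2 ∂μ := by
        rw [mul_pow, ← Real.rpow_natCast ((∫ x, f x ^ 2 ∂μ) ^ ((1:ℝ)/2)) 2,
          ← Real.rpow_natCast ((b - a) ^ ((1:ℝ)/2)) 2,
          ← Real.rpow_mul hnn2, ← Real.rpow_mul hba]
        norm_num [mul_comm]
    _ = (b - a) * ∫ x in a..b, f x ^ 2 := by rw [hint2]

theorem third_difference_bound
    (u : ℝ → ℝ) (hu : ContDiff ℝ 3 u) (t₀ Δt : ℝ) (hΔt : 0 < Δt) :
    |u (t₀ + 3*Δt) - 3 * u (t₀ + 2*Δt) + 3 * u (t₀ + 1*Δt) - u t₀| ^ 2 ≤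
      9 * Δt^5 * ∫ s in t₀..(t₀ + 3*Δt), |iteratedDeriv 3 u s| ^ 2 := by
  set v1 := deriv u with hv1def
  set v2 := deriv v1 with hv2def
  set v3 := deriv v2 with hv3def
  -- regularity
  have hu3 : ContDiff ℝ ((0:ℕ) + (3:ℕ) : ℕ) u := by exact_mod_cast hu
  have hu2 : ContDiff ℝ ((1:ℕ) + (2:ℕ) : ℕ) u := by exact_mod_cast hu
  have hu1 : ContDiff ℝ ((2:ℕ) + (1:ℕ) : ℕ) u := by exact_mod_cast hu
  have hcv1 : ContDiff ℝ 2 v1 := by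
    have := hu1.iterate_deriv' 2 1
    simpa [hv1def] using this
  have hcv2 : ContDiff ℝ 1 v2 := by
    have := hu2.iterate_deriv' 1 2
    simpa [Function.iterate_succ, hv1def, hv2def] using this
  have hcv3 : Continuous v3 := by
    have := (hu3.iterate_deriv' 0 3)
    simpa [Function.iterate_succ, hv1def, hv2def, hv3def] using this.continuous
  have hdu : Differentiable ℝ u := hu.differentiable (by norm_num)
  have hdv1 : Differentiable ℝ v1 := hcv1.differentiable (by norm_num)
  have hdv2 : Differentiable ℝ v2 := hcv2.differentiable (by norm_num)
  have hContv1 : Continuous v1 := hdv1.continuous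
  have hContv2 : Continuous v2 := hdv2.continuous
  have hiter : ∀ s, iteratedDeriv 3 u s = v3 s := by
    intro s
    simp [iteratedDeriv_succ, iteratedDeriv_zero, hv1def, hv2def, hv3def]
  -- the target integral
  set M := ∫ s in t₀..(t₀ + 3*Δt), (v3 s) ^ 2 with hM
  have hMeq : (∫ s in t₀..(t₀ + 3*Δt), |iteratedDeriv 3 u s| ^ 2) = M := by
    rw [hM]
    apply intervalIntegral.integral_congr
    intro s _
    simp only [hiter s, sq_abs]
  have hle03 : t₀ ≤ t₀ + 3*Δt := by linarith
  have hMnn : 0 ≤ M := intervalIntegral.integral_nonneg hle03 (fun x _ => sq_nonneg _)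
  have hintv3sq : IntervalIntegrable (fun s => (v3 s)^2) volume t₀ (t₀ + 3*Δt) :=
    ((hcv3.pow 2).intervalIntegrable _ _)
  set C := Real.sqrt (Δt * M) with hC
  have hCnn : 0 ≤ C := Real.sqrt_nonneg _
  -- step 1: bound on second derivative differences
  have step1 : ∀ r, t₀ ≤ r → r + Δt ≤ t₀ + 3*Δt → |v2 (r + Δt) - v2 r| ≤ C := by
    intro r hr hr'
    have hle : r ≤ r + Δt := by linarith
    have hftc : ∫ x in r..(r + Δt), v3 x = v2 (r + Δt) - v2 r := by
      apply intervalIntegral.integral_deriv_eq_sub (fun x _ => (hdv2 x))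
      exact hcv3.intervalIntegrable _ _
    have hcs : (∫ x in r..(r + Δt), v3 x) ^ 2 ≤ Δt * ∫ x in r..(r + Δt), (v3 x)^2 := by
      have := sq_intervalIntegral_le hle hcv3
      simpa using this
    have hmono : (∫ x in r..(r + Δt), (v3 x)^2) ≤ M := by
      apply intervalIntegral.integral_mono_interval hr hle hr'
      · exact Filter.Eventually.of_forall fun x => sq_nonneg _
      · exact hintv3sq
    have hsq : (v2 (r + Δt) - v2 r) ^ 2 ≤ Δt * M := by
      rw [← hftc]
      exact hcs.trans (by nlinarith)
    calc |v2 (r + Δt) - v2 r| = Real.sqrt ((v2 (r + Δt) - v2 r)^2) :=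
          (Real.sqrt_sq_eq_abs _).symm
      _ ≤ Real.sqrt (Δt * M) := Real.sqrt_le_sqrt hsq
      _ = C := rfl
  -- step 2: bound on first derivative second differences
  have step2 : ∀ s, t₀ ≤ s → s + 2*Δt ≤ t₀ + 3*Δt →
      |v1 (s + 2*Δt) - 2 * v1 (s + Δt) + v1 s| ≤ C * Δt := by
    intro s hs hs'
    have hle : s ≤ s + Δt := by linarith
    have hftc : ∫ r in s..(s + Δt), (v2 (r + Δt) - v2 r) =
        (v1 (s + Δt + Δt) - v1 (s + Δt)) - (v1 (s + Δt) - v1 s) := by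
      apply intervalIntegral.integral_eq_sub_of_hasDerivAt
        (f := fun r => v1 (r + Δt) - v1 r)
      · intro x _
        have h1 : HasDerivAt (fun r => v1 (r + Δt)) (v2 (x + Δt)) x := by
          have := ((hdv1 (x + Δt)).hasDerivAt).comp x
            ((hasDerivAt_id x).add_const Δt)
          simpa [Function.comp_def, hv2def] using this
        exact h1.sub (hdv1 x).hasDerivAt
      · exact ((hContv2.comp (continuous_id.add continuous_const)).sub
          hContv2).intervalIntegrable _ _
    have hb : ‖∫ r in s..(s + Δt), (v2 (r + Δt) - v2 r)‖ ≤ C * |s + Δt - s| := by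
      apply intervalIntegral.norm_integral_le_of_norm_le_const
      intro x hx
      rw [Set.uIoc_of_le hle] at hx
      have := step1 x (by linarith [hx.1]) (by linarith [hx.2])
      simpa [Real.norm_eq_abs] using this
    have heq : v1 (s + 2*Δt) - 2 * v1 (s + Δt) + v1 s =
        (v1 (s + Δt + Δt) - v1 (s + Δt)) - (v1 (s + Δt) - v1 s) := by
      have : s + 2*Δt = s + Δt + Δt := by ring
      rw [this]; ring
    rw [heq, ← hftc]
    simpa [Real.norm_eq_abs, abs_of_pos hΔt] using hb
  -- step 3: the third difference
  have hftc3 : ∫ s in t₀..(t₀ + Δt), (v1 (s + 2*Δt) - 2 * v1 (s + Δt) + v1 s) =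
      (u (t₀ + Δt + 2*Δt) - 2 * u (t₀ + Δt + Δt) + u (t₀ + Δt))
        - (u (t₀ + 2*Δt) - 2 * u (t₀ + Δt) + u t₀) := by
    apply intervalIntegral.integral_eq_sub_of_hasDerivAt
      (f := fun s => u (s + 2*Δt) - 2 * u (s + Δt) + u s)
    · intro x _
      have h1 : HasDerivAt (fun s => u (s + 2*Δt)) (v1 (x + 2*Δt)) x := by
        have := ((hdu (x + 2*Δt)).hasDerivAt).comp x
          ((hasDerivAt_id x).add_const (2*Δt))
        simpa [Function.comp_def, hv1def] using this
      have h2 : HasDerivAt (fun s => u (s + Δt)) (v1 (x + Δt)) x := by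
        have := ((hdu (x + Δt)).hasDerivAt).comp x
          ((hasDerivAt_id x).add_const Δt)
        simpa [Function.comp_def, hv1def] using this
      exact (h1.sub (h2.const_mul 2)).add (hdu x).hasDerivAt
    · apply Continuous.intervalIntegrable
      exact ((hContv1.comp (continuous_id.add continuous_const)).sub
        (continuous_const.mul (hContv1.comp (continuous_id.add continuous_const)))).add hContv1
  have hb3 : |u (t₀ + 3*Δt) - 3 * u (t₀ + 2*Δt) + 3 * u (t₀ + 1*Δt) - u t₀| ≤ C * Δt * Δt := by
    have hle : t₀ ≤ t₀ + Δt := by linarith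
    have hb : ‖∫ s in t₀..(t₀ + Δt), (v1 (s + 2*Δt) - 2 * v1 (s + Δt) + v1 s)‖
        ≤ C * Δt * |t₀ + Δt - t₀| := by
      apply intervalIntegral.norm_integral_le_of_norm_le_const
      intro x hx
      rw [Set.uIoc_of_le hle] at hx
      have := step2 x (by linarith [hx.1]) (by linarith [hx.2])
      simpa [Real.norm_eq_abs] using this
    have heq : u (t₀ + 3*Δt) - 3 * u (t₀ + 2*Δt) + 3 * u (t₀ + 1*Δt) - u t₀ =
        (u (t₀ + Δt + 2*Δt) - 2 * u (t₀ + Δt + Δt) + u (t₀ + Δt))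
          - (u (t₀ + 2*Δt) - 2 * u (t₀ + Δt) + u t₀) := by
      have e1 : t₀ + Δt + 2*Δt = t₀ + 3*Δt := by ring
      have e2 : t₀ + Δt + Δt = t₀ + 2*Δt := by ring
      have e3 : t₀ + 1*Δt = t₀ + Δt := by ring
      rw [e1, e2, e3]; ring
    rw [heq, ← hftc3]
    calc |∫ s in t₀..(t₀ + Δt), (v1 (s + 2*Δt) - 2 * v1 (s + Δt) + v1 s)|
        ≤ C * Δt * |t₀ + Δt - t₀| := by simpa [Real.norm_eq_abs] using hb
      _ = C * Δt * Δt := by rw [abs_of_pos (by simpa using hΔt)]; ring_nf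
  -- conclude
  rw [hMeq]
  have habs : (0:ℝ) ≤ |u (t₀ + 3*Δt) - 3 * u (t₀ + 2*Δt) + 3 * u (t₀ + 1*Δt) - u t₀| :=
    abs_nonneg _
  have hsq : |u (t₀ + 3*Δt) - 3 * u (t₀ + 2*Δt) + 3 * u (t₀ + 1*Δt) - u t₀| ^ 2
      ≤ (C * Δt * Δt) ^ 2 := by
    apply pow_le_pow_left₀ habs hb3
  have hCsq : C ^ 2 = Δt * M := Real.sq_sqrt (by positivity)
  calc |u (t₀ + 3*Δt) - 3 * u (t₀ + 2*Δt) + 3 * u (t₀ + 1*Δt) - u t₀| ^ 2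
      ≤ (C * Δt * Δt) ^ 2 := hsq
    _ = C^2 * Δt^4 := by ring
    _ = Δt^5 * M := by rw [hCsq]; ring
    _ ≤ 9 * Δt^5 * M := by nlinarith [pow_pos hΔt 5]
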